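/- arXiv:1009.5326 — 2 statements merged into one kernel-verified Lean document; each statement's English description precedes it below -/
import Mathlib

section
/- Let D ⊂ ℝ² be a bounded measurable set with rotational symmetry of order N ≥ 3 (so its centroid is at the origin), and let T be an invertible 2×2 real matrix. Then I₀(T(D)) = (1/2) I₀(D) ‖T‖²_HS |det T|, where I₀(E) = ∫_E |x|² dx. -/
open MeasureTheory Real Set

noncomputable section

/-- The 2×2 rotation matrix by angle `θ`. -/
def rot (θ : ℝ) : Matrix (Fin 2) (Fin 2) ℝ :=
  !![Real.cos θ, -Real.sin θ; Real.sin θ, Real.cos θ]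

lemma int_aux {D : Set (Fin 2 → ℝ)} (hb : Bornology.IsBounded D)
    {g : (Fin 2 → ℝ) → ℝ} (hg : Continuous g) : IntegrableOn g D := by
  obtain ⟨r, hr⟩ := hb.subset_closedBall 0
  exact (hg.continuousOn.integrableOn_compact (isCompact_closedBall 0 r)).mono_set hr

lemma integral_image_mulVec (A : Matrix (Fin 2) (Fin 2) ℝ) (hA : IsUnit A.det)
    {D : Set (Fin 2 → ℝ)} (hm : MeasurableSet D) (g : (Fin 2 → ℝ) → ℝ) :
    ∫ x in (fun x => A.mulVec x) '' D, g x = |A.det| * ∫ x in D, g (A.mulVec x) := by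
  set L : (Fin 2 → ℝ) →L[ℝ] (Fin 2 → ℝ) :=
    LinearMap.toContinuousLinearMap (Matrix.toLin' A) with hL
  have hfun : (fun x => A.mulVec x) = ⇑L := by
    ext x i; simp [hL, Matrix.toLin'_apply]
  have hinj : Set.InjOn (fun x => A.mulVec x) D :=
    (Matrix.mulVec_injective_iff_isUnit.mpr
      ((Matrix.isUnit_iff_isUnit_det A).mpr hA)).injOn
  have hdet : L.det = A.det := by
    simp [hL, ContinuousLinearMap.det, LinearMap.det_toLin']
  rw [hfun] at hinj ⊢
  rw [integral_image_eq_integral_abs_det_fderiv_smul volume hm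
      (fun x _ => L.hasFDerivAt.hasFDerivWithinAt) hinj g]
  simp only [hdet, smul_eq_mul, ← hfun]
  rw [integral_const_mul]

/-- For a bounded measurable set `D ⊂ ℝ²` with rotational symmetry of order `N ≥ 3`
and an invertible 2×2 matrix `T`: `I₀(T(D)) = (1/2) I₀(D) ‖T‖²_HS |det T|`,
where `I₀(E) = ∫_E |x|² dx`. -/
theorem inertia_linear_image (N : ℕ) (hN : 3 ≤ N) (D : Set (Fin 2 → ℝ))
    (hmeas : MeasurableSet D) (hbdd : Bornology.IsBounded D)
    (hsym : (fun x => (rot (2 * Real.pi / (N : ℝ))).mulVec x) '' D = D)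
    (T : Matrix (Fin 2) (Fin 2) ℝ) (hT : IsUnit T.det) :
    (∫ x in (fun x => T.mulVec x) '' D, (x 0 ^ 2 + x 1 ^ 2))
      = (1 / 2) * (∫ x in D, (x 0 ^ 2 + x 1 ^ 2))
          * (∑ i : Fin 2, ∑ j : Fin 2, (T i j) ^ 2) * |T.det| := by
  set θ := 2 * Real.pi / (N : ℝ) with hθ
  have hNpos : (0 : ℝ) < N := by positivity
  have hθpos : 0 < θ := div_pos (by positivity) hNpos
  have hθlt : θ < Real.pi := by
    rw [hθ, div_lt_iff₀ hNpos]
    have h3 : (3 : ℝ) ≤ N := by exact_mod_cast hN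
    nlinarith [Real.pi_pos]
  have hsin : 0 < Real.sin θ := Real.sin_pos_of_pos_of_lt_pi hθpos hθlt
  set a := ∫ x in D, (x 0) ^ 2 with ha
  set b := ∫ x in D, (x 1) ^ 2 with hb
  set m := ∫ x in D, x 0 * x 1 with hm
  have Ia : IntegrableOn (fun x : Fin 2 → ℝ => (x 0) ^ 2) D :=
    int_aux hbdd ((continuous_apply 0).pow 2)
  have Ib : IntegrableOn (fun x : Fin 2 → ℝ => (x 1) ^ 2) D :=
    int_aux hbdd ((continuous_apply 1).pow 2)
  have Im : IntegrableOn (fun x : Fin 2 → ℝ => x 0 * x 1) D :=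
    int_aux hbdd ((continuous_apply 0).mul (continuous_apply 1))
  have expand : ∀ p q u v : ℝ,
      (∫ x in D, (p * x 0 + q * x 1) * (u * x 0 + v * x 1))
        = p * u * a + q * v * b + (p * v + q * u) * m := by
    intro p q u v
    have key : ∀ x : Fin 2 → ℝ, (p * x 0 + q * x 1) * (u * x 0 + v * x 1)
        = p * u * (x 0) ^ 2 + q * v * (x 1) ^ 2 + (p * v + q * u) * (x 0 * x 1) := by
      intro x; ring
    simp_rw [key]
    have h1 : Integrable (fun x : Fin 2 → ℝ => p * u * (x 0) ^ 2) (volume.restrict D) :=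
      Ia.const_mul _
    have h2 : Integrable (fun x : Fin 2 → ℝ => q * v * (x 1) ^ 2) (volume.restrict D) :=
      Ib.const_mul _
    have h3 : Integrable (fun x : Fin 2 → ℝ => (p * v + q * u) * (x 0 * x 1))
        (volume.restrict D) := Im.const_mul _
    have h12 : Integrable (fun x : Fin 2 → ℝ => p * u * (x 0) ^ 2 + q * v * (x 1) ^ 2)
        (volume.restrict D) := h1.add h2
    rw [integral_add h12 h3, integral_add h1 h2,
      integral_const_mul, integral_const_mul, integral_const_mul]
  have hdetrot : (rot θ).det = 1 := by
    simp [rot, Matrix.det_fin_two_of]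
    nlinarith [Real.sin_sq_add_cos_sq θ]
  have hrot0 : ∀ x : Fin 2 → ℝ, (rot θ).mulVec x 0
      = Real.cos θ * x 0 + (-Real.sin θ) * x 1 := by
    intro x; simp [rot, Matrix.mulVec, dotProduct, Fin.sum_univ_two]
  have hrot1 : ∀ x : Fin 2 → ℝ, (rot θ).mulVec x 1
      = Real.sin θ * x 0 + Real.cos θ * x 1 := by
    intro x; simp [rot, Matrix.mulVec, dotProduct, Fin.sum_univ_two]
  have hsymInt : ∀ g : (Fin 2 → ℝ) → ℝ,
      (∫ x in D, g x) = ∫ x in D, g ((rot θ).mulVec x) := by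
    intro g
    conv_lhs => rw [← hsym]
    rw [integral_image_mulVec _ (by rw [hdetrot]; exact isUnit_one) hmeas g, hdetrot]
    simp
  have E1 : a = Real.cos θ * Real.cos θ * a + (-Real.sin θ) * (-Real.sin θ) * b
      + (Real.cos θ * (-Real.sin θ) + (-Real.sin θ) * Real.cos θ) * m := by
    have step : a = ∫ x in D,
        (Real.cos θ * x 0 + (-Real.sin θ) * x 1) * (Real.cos θ * x 0 + (-Real.sin θ) * x 1) := by
      rw [ha, hsymInt (fun x => (x 0) ^ 2)]
      congr 1; ext x; rw [hrot0]; ring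
    exact step.trans (expand _ _ _ _)
  have E2 : m = Real.cos θ * Real.sin θ * a + (-Real.sin θ) * Real.cos θ * b
      + (Real.cos θ * Real.cos θ + (-Real.sin θ) * Real.sin θ) * m := by
    have step : m = ∫ x in D,
        (Real.cos θ * x 0 + (-Real.sin θ) * x 1) * (Real.sin θ * x 0 + Real.cos θ * x 1) := by
      rw [hm, hsymInt (fun x => x 0 * x 1)]
      congr 1; ext x; rw [hrot0, hrot1]
    exact step.trans (expand _ _ _ _)
  have pyth := Real.sin_sq_add_cos_sq θ
  have F1 : Real.sin θ ^ 2 * a - Real.sin θ ^ 2 * b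
      + 2 * Real.cos θ * Real.sin θ * m = 0 := by linear_combination E1 + a * pyth
  have F2 : 2 * Real.sin θ ^ 2 * m - Real.cos θ * Real.sin θ * a
      + Real.cos θ * Real.sin θ * b = 0 := by linear_combination E2 + m * pyth
  have key2 : Real.sin θ ^ 2 * (a - b) = 0 := by
    have key : Real.sin θ ^ 2 * (Real.sin θ ^ 2 + Real.cos θ ^ 2) * (a - b) = 0 := by
      linear_combination Real.sin θ ^ 2 * F1 - Real.cos θ * Real.sin θ * F2
    linear_combination key - Real.sin θ ^ 2 * (a - b) * pyth
  have hs2 : Real.sin θ ^ 2 ≠ 0 := by positivity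
  have hab : a = b := by
    have := mul_eq_zero.mp key2
    rcases this with h | h
    · exact absurd h hs2
    · linarith [sub_eq_zero.mp h]
  have hm0 : m = 0 := by
    rw [hab] at F2
    have : Real.sin θ ^ 2 * m = 0 := by linarith
    rcases mul_eq_zero.mp this with h | h
    · exact absurd h hs2
    · exact h
  have himg := integral_image_mulVec T hT hmeas (fun x => (x 0) ^ 2 + (x 1) ^ 2)
  have hT0 : ∀ x : Fin 2 → ℝ, T.mulVec x 0 = T 0 0 * x 0 + T 0 1 * x 1 := by
    intro x; simp [Matrix.mulVec, dotProduct, Fin.sum_univ_two]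
  have hT1 : ∀ x : Fin 2 → ℝ, T.mulVec x 1 = T 1 0 * x 0 + T 1 1 * x 1 := by
    intro x; simp [Matrix.mulVec, dotProduct, Fin.sum_univ_two]
  have Isq : ∀ p q : ℝ, IntegrableOn
      (fun x : Fin 2 → ℝ => (p * x 0 + q * x 1) * (p * x 0 + q * x 1)) D := by
    intro p q
    exact int_aux hbdd (((continuous_const.mul (continuous_apply 0)).add
      (continuous_const.mul (continuous_apply 1))).mul
      ((continuous_const.mul (continuous_apply 0)).add
      (continuous_const.mul (continuous_apply 1))))
  have hsplit : (∫ x in D, ((T.mulVec x 0) ^ 2 + (T.mulVec x 1) ^ 2))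
      = (∫ x in D, (T 0 0 * x 0 + T 0 1 * x 1) * (T 0 0 * x 0 + T 0 1 * x 1))
        + ∫ x in D, (T 1 0 * x 0 + T 1 1 * x 1) * (T 1 0 * x 0 + T 1 1 * x 1) := by
    have hadd : Integrable (fun x : Fin 2 → ℝ =>
        (T 0 0 * x 0 + T 0 1 * x 1) * (T 0 0 * x 0 + T 0 1 * x 1)
        + (T 1 0 * x 0 + T 1 1 * x 1) * (T 1 0 * x 0 + T 1 1 * x 1))
        (volume.restrict D) := (Isq _ _).add (Isq _ _)
    rw [← integral_add (Isq _ _) (Isq _ _)]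
    congr 1; ext x; rw [hT0, hT1]; ring
  have hIab : (∫ x in D, ((x 0) ^ 2 + (x 1) ^ 2)) = a + b := integral_add Ia Ib
  rw [himg, hsplit, expand, expand, hIab]
  simp only [Fin.sum_univ_two]
  rw [hab, hm0]
  ring


end
end

section
/- Let D ⊂ ℝ² be a bounded measurable set of positive area with rotational symmetry of order N ≥ 3, and let T be an invertible 2×2 real matrix. Then I(T D)/A(T D)² = I(T^{-1} D)/A(T^{-1} D)², where A is area and I is moment of inertia about the centroid. -/
open MeasureTheory Real Set

noncomputable section

/-- Area of a plane region. -/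
def area (D : Set (Fin 2 → ℝ)) : ℝ := (volume D).toReal

/-- Centroid of a plane region. -/
def centroid (D : Set (Fin 2 → ℝ)) (j : Fin 2) : ℝ := (∫ x in D, x j) / area D

/-- Moment of inertia about the centroid. -/
def inertia (D : Set (Fin 2 → ℝ)) : ℝ :=
  ∫ x in D, ((x 0 - centroid D 0) ^ 2 + (x 1 - centroid D 1) ^ 2)

/-- Volume of a linear image. -/
lemma aux_volume (M : Matrix (Fin 2) (Fin 2) ℝ) (D : Set (Fin 2 → ℝ)) :
    volume ((fun x => M.mulVec x) '' D) = ENNReal.ofReal |M.det| * volume D := by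
  have h : (fun x : Fin 2 → ℝ => M.mulVec x)
      = (Matrix.toLin' M : (Fin 2 → ℝ) →ₗ[ℝ] (Fin 2 → ℝ)) := by
    funext x; simp [Matrix.toLin'_apply]
  rw [h, Measure.addHaar_image_linearMap, LinearMap.det_toLin']

/-- Change of variables for linear maps. -/
lemma aux_cov (M : Matrix (Fin 2) (Fin 2) ℝ) (hM : IsUnit M.det)
    {D : Set (Fin 2 → ℝ)} (hD : MeasurableSet D) (g : (Fin 2 → ℝ) → ℝ) :
    ∫ x in (fun x => M.mulVec x) '' D, g x = |M.det| * ∫ x in D, g (M.mulVec x) := by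
  have hinj : Set.InjOn (fun x => M.mulVec x) D := by
    intro x _ y _ h
    have := congrArg (fun v => M⁻¹.mulVec v) h
    simpa only [Matrix.mulVec_mulVec, Matrix.nonsing_inv_mul M hM, Matrix.one_mulVec] using this
  set L := LinearMap.toContinuousLinearMap (Matrix.toLin' M) with hL
  have hfd : ∀ x ∈ D, HasFDerivWithinAt (fun x => M.mulVec x) L D x := by
    intro x _
    have : HasFDerivAt (fun x => M.mulVec x) L x := by
      have := L.hasFDerivAt (x := x)
      convert this using 2
      simp [hL, Matrix.toLin'_apply]
    exact this.hasFDerivWithinAt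
  rw [integral_image_eq_integral_abs_det_fderiv_smul volume hD hfd hinj g]
  have hdet : (L : (Fin 2 → ℝ) →ₗ[ℝ] (Fin 2 → ℝ)).det = M.det := by
    simp [hL, LinearMap.det_toLin']
  simp only [ContinuousLinearMap.det, hdet, smul_eq_mul]
  rw [integral_const_mul]

/-- Continuous functions are integrable on bounded sets. -/
lemma aux_int {g : (Fin 2 → ℝ) → ℝ} (hg : Continuous g)
    {D : Set (Fin 2 → ℝ)} (hbdd : Bornology.IsBounded D) :
    IntegrableOn g D :=
  ((hg.continuousOn).integrableOn_compact hbdd.isCompact_closure).mono_set subset_closure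

set_option maxHeartbeats 1000000

/-- For a bounded measurable `D ⊂ ℝ²` of positive area with rotational symmetry of order
`N ≥ 3`, and an invertible 2×2 matrix `T`:
`I(T D)/A(T D)² = I(T⁻¹ D)/A(T⁻¹ D)²`. -/
theorem inertia_image_eq_inertia_inverse_image (N : ℕ) (hN : 3 ≤ N) (D : Set (Fin 2 → ℝ))
    (hmeas : MeasurableSet D) (hbdd : Bornology.IsBounded D) (hpos : 0 < volume D)
    (hsym : (fun x => (rot (2 * Real.pi / (N : ℝ))).mulVec x) '' D = D)
    (T : Matrix (Fin 2) (Fin 2) ℝ) (hT : IsUnit T.det) :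
    inertia ((fun x => T.mulVec x) '' D) / area ((fun x => T.mulVec x) '' D) ^ 2
      = inertia ((fun x => T⁻¹.mulVec x) '' D) / area ((fun x => T⁻¹.mulVec x) '' D) ^ 2 := by
  -- notation
  set θ : ℝ := 2 * Real.pi / (N : ℝ) with hθ
  set p : ℝ := Real.cos θ with hp
  set q : ℝ := Real.sin θ with hq'
  set R : Matrix (Fin 2) (Fin 2) ℝ := rot θ with hR
  have hN3 : (3 : ℝ) ≤ (N : ℝ) := by exact_mod_cast hN
  have hθpos : 0 < θ := by
    rw [hθ]; positivity
  have hθlt : θ < Real.pi := by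
    rw [hθ]
    rw [div_lt_iff₀ (by linarith : (0:ℝ) < (N:ℝ))]
    nlinarith [Real.pi_pos]
  have hqpos : 0 < q := Real.sin_pos_of_pos_of_lt_pi hθpos hθlt
  have hq0 : q ≠ 0 := ne_of_gt hqpos
  have hP : p ^ 2 + q ^ 2 = 1 := by
    rw [hp, hq']; rw [add_comm]; exact Real.sin_sq_add_cos_sq θ
  have hRdet : R.det = 1 := by
    rw [hR]; simp [rot, Matrix.det_fin_two_of]; nlinarith [hP]
  have hRunit : IsUnit R.det := by rw [hRdet]; exact isUnit_one
  -- rotation action on coordinates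
  have hrv0 : ∀ x : Fin 2 → ℝ, (R.mulVec x) 0 = p * x 0 - q * x 1 := by
    intro x
    simp [hR, rot, Matrix.mulVec, dotProduct, Fin.sum_univ_two]
    ring
  have hrv1 : ∀ x : Fin 2 → ℝ, (R.mulVec x) 1 = q * x 0 + p * x 1 := by
    intro x
    simp [hR, rot, Matrix.mulVec, dotProduct, Fin.sum_univ_two]
    rfl
  -- key: rotation invariance of integrals
  have key : ∀ g : (Fin 2 → ℝ) → ℝ, ∫ x in D, g x = ∫ x in D, g (R.mulVec x) := by
    intro g
    conv_lhs => rw [← hsym]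
    rw [show (fun x => (rot (2 * Real.pi / (N : ℝ))).mulVec x) = fun x => R.mulVec x from rfl]
    rw [aux_cov R hRunit hmeas g, hRdet]
    simp
  -- moments
  set m0 : ℝ := ∫ x in D, x 0 with hm0'
  set m1 : ℝ := ∫ x in D, x 1 with hm1'
  set a : ℝ := ∫ x in D, (x 0) ^ 2 with ha'
  set b : ℝ := ∫ x in D, x 0 * x 1 with hb'
  set c : ℝ := ∫ x in D, (x 1) ^ 2 with hc'
  -- integrabilities
  have i0 : IntegrableOn (fun x : Fin 2 → ℝ => x 0) D := aux_int (continuous_apply 0) hbdd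
  have i1 : IntegrableOn (fun x : Fin 2 → ℝ => x 1) D := aux_int (continuous_apply 1) hbdd
  have ia : IntegrableOn (fun x : Fin 2 → ℝ => (x 0) ^ 2) D :=
    aux_int ((continuous_apply 0).pow 2) hbdd
  have ib : IntegrableOn (fun x : Fin 2 → ℝ => x 0 * x 1) D :=
    aux_int ((continuous_apply 0).mul (continuous_apply 1)) hbdd
  have ic : IntegrableOn (fun x : Fin 2 → ℝ => (x 1) ^ 2) D :=
    aux_int ((continuous_apply 1).pow 2) hbdd
  -- linear combinations of integrals
  have lin2 : ∀ c₁ c₂ : ℝ, ∫ x in D, (c₁ * x 0 + c₂ * x 1) = c₁ * m0 + c₂ * m1 := by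
    intro c₁ c₂
    rw [integral_add (i0.const_mul c₁) (i1.const_mul c₂), integral_const_mul, integral_const_mul]
  have lin3 : ∀ c₁ c₂ c₃ : ℝ,
      ∫ x in D, (c₁ * (x 0) ^ 2 + c₂ * (x 0 * x 1) + c₃ * (x 1) ^ 2)
        = c₁ * a + c₂ * b + c₃ * c := by
    intro c₁ c₂ c₃
    have h12 : IntegrableOn (fun x : Fin 2 → ℝ => c₁ * (x 0) ^ 2 + c₂ * (x 0 * x 1)) D := by
      exact (ia.const_mul c₁).add (ib.const_mul c₂)
    calc ∫ x in D, (c₁ * (x 0) ^ 2 + c₂ * (x 0 * x 1) + c₃ * (x 1) ^ 2)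
        = (∫ x in D, (c₁ * (x 0) ^ 2 + c₂ * (x 0 * x 1))) + ∫ x in D, c₃ * (x 1) ^ 2 :=
          integral_add h12 (ic.const_mul c₃)
      _ = ((∫ x in D, c₁ * (x 0) ^ 2) + ∫ x in D, c₂ * (x 0 * x 1)) + ∫ x in D, c₃ * (x 1) ^ 2 := by
          rw [integral_add (ia.const_mul c₁) (ib.const_mul c₂)]
      _ = c₁ * a + c₂ * b + c₃ * c := by
          rw [integral_const_mul, integral_const_mul, integral_const_mul]
  -- first moment equations
  have eqm0 : m0 = p * m0 - q * m1 := by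
    calc m0 = ∫ x in D, (R.mulVec x) 0 := by rw [hm0']; exact key _
      _ = ∫ x in D, (p * x 0 + (-q) * x 1) := by
          apply integral_congr_ae
          filter_upwards with x
          rw [hrv0 x]; ring
      _ = p * m0 + (-q) * m1 := lin2 p (-q)
      _ = p * m0 - q * m1 := by ring
  have eqm1 : m1 = q * m0 + p * m1 := by
    calc m1 = ∫ x in D, (R.mulVec x) 1 := by rw [hm1']; exact key _
      _ = ∫ x in D, (q * x 0 + p * x 1) := by
          apply integral_congr_ae
          filter_upwards with x
          rw [hrv1 x]
      _ = q * m0 + p * m1 := lin2 q p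
  -- centroid of D is at the origin
  have hm0 : m0 = 0 := by
    have h1 : ((1 - p) ^ 2 + q ^ 2) * m0 = 0 := by linear_combination (1 - p) * eqm0 - q * eqm1
    rcases mul_eq_zero.mp h1 with h | h
    · exfalso; nlinarith [sq_nonneg (1 - p), sq_nonneg q, hqpos]
    · exact h
  have hm1 : m1 = 0 := by
    have h1 : q * m1 = 0 := by linear_combination eqm0 + (p - 1) * hm0
    exact (mul_eq_zero.mp h1).resolve_left hq0
  -- second moment equations
  have eqa : a = p ^ 2 * a + (-(2 * p * q)) * b + q ^ 2 * c := by
    calc a = ∫ x in D, ((R.mulVec x) 0) ^ 2 := by rw [ha']; exact key _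
      _ = ∫ x in D, (p ^ 2 * (x 0) ^ 2 + (-(2 * p * q)) * (x 0 * x 1) + q ^ 2 * (x 1) ^ 2) := by
          apply integral_congr_ae
          filter_upwards with x
          rw [hrv0 x]; ring
      _ = _ := lin3 _ _ _
  have eqb : b = (p * q) * a + (p ^ 2 - q ^ 2) * b + (-(p * q)) * c := by
    calc b = ∫ x in D, ((R.mulVec x) 0) * ((R.mulVec x) 1) := by rw [hb']; exact key _
      _ = ∫ x in D, ((p * q) * (x 0) ^ 2 + (p ^ 2 - q ^ 2) * (x 0 * x 1)
            + (-(p * q)) * (x 1) ^ 2) := by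
          apply integral_congr_ae
          filter_upwards with x
          rw [hrv0 x, hrv1 x]; ring
      _ = _ := lin3 _ _ _
  -- the second moment matrix is scalar
  have F1 : q * a + 2 * p * b - q * c = 0 := by
    have h1 : q * (q * a + 2 * p * b - q * c) = 0 := by
      linear_combination eqa + a * hP
    exact (mul_eq_zero.mp h1).resolve_left hq0
  have F2 : 2 * q * b - p * (a - c) = 0 := by
    have h1 : q * (2 * q * b - p * (a - c)) = 0 := by
      linear_combination eqb + b * hP
    exact (mul_eq_zero.mp h1).resolve_left hq0
  have hac : a = c := by linear_combination q * F1 - p * F2 - (a - c) * hP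
  have hb0 : b = 0 := by linear_combination (p / 2) * F1 + (q / 2) * F2 - b * hP
  -- area facts
  set A : ℝ := area D with hA'
  have hvol_fin : volume D < ⊤ := hbdd.measure_lt_top
  have hApos : 0 < A := by
    rw [hA', area]
    exact ENNReal.toReal_pos (ne_of_gt hpos) (ne_of_lt hvol_fin)
  have hA0 : A ≠ 0 := ne_of_gt hApos
  -- main computation for any invertible matrix
  have main : ∀ M : Matrix (Fin 2) (Fin 2) ℝ, IsUnit M.det →
      inertia ((fun x => M.mulVec x) '' D) / area ((fun x => M.mulVec x) '' D) ^ 2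
        = a * (M 0 0 ^ 2 + M 0 1 ^ 2 + M 1 0 ^ 2 + M 1 1 ^ 2) / (|M.det| * A ^ 2) := by
    intro M hM
    have hMd : M.det ≠ 0 := hM.ne_zero
    have hMd' : |M.det| ≠ 0 := abs_ne_zero.mpr hMd
    have hAreaM : area ((fun x => M.mulVec x) '' D) = |M.det| * A := by
      rw [area, aux_volume M D, ENNReal.toReal_mul, ENNReal.toReal_ofReal (abs_nonneg _)]
      rfl
    have hcent : ∀ j : Fin 2, centroid ((fun x => M.mulVec x) '' D) j = 0 := by
      intro j
      rw [centroid, aux_cov M hM hmeas (fun x => x j)]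
      have : ∫ x in D, (M.mulVec x) j = M j 0 * m0 + M j 1 * m1 := by
        calc ∫ x in D, (M.mulVec x) j = ∫ x in D, (M j 0 * x 0 + M j 1 * x 1) := by
              apply integral_congr_ae
              filter_upwards with x
              simp [Matrix.mulVec, dotProduct, Fin.sum_univ_two]
          _ = _ := lin2 _ _
      rw [this, hm0, hm1]
      simp
    have hIn : inertia ((fun x => M.mulVec x) '' D)
        = |M.det| * (a * (M 0 0 ^ 2 + M 0 1 ^ 2 + M 1 0 ^ 2 + M 1 1 ^ 2)) := by
      rw [inertia, hcent 0, hcent 1]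
      rw [aux_cov M hM hmeas (fun x => (x 0 - 0) ^ 2 + (x 1 - 0) ^ 2)]
      congr 1
      calc ∫ x in D, (((M.mulVec x) 0 - 0) ^ 2 + ((M.mulVec x) 1 - 0) ^ 2)
          = ∫ x in D, ((M 0 0 ^ 2 + M 1 0 ^ 2) * (x 0) ^ 2
              + (2 * (M 0 0 * M 0 1 + M 1 0 * M 1 1)) * (x 0 * x 1)
              + (M 0 1 ^ 2 + M 1 1 ^ 2) * (x 1) ^ 2) := by
            apply integral_congr_ae
            filter_upwards with x
            simp only [Matrix.mulVec, dotProduct, Fin.sum_univ_two]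
            ring
        _ = (M 0 0 ^ 2 + M 1 0 ^ 2) * a + (2 * (M 0 0 * M 0 1 + M 1 0 * M 1 1)) * b
              + (M 0 1 ^ 2 + M 1 1 ^ 2) * c := lin3 _ _ _
        _ = _ := by rw [hb0, ← hac]; ring
    rw [hIn, hAreaM]
    rw [mul_pow]
    rw [show |M.det| ^ 2 * A ^ 2 = |M.det| * (|M.det| * A ^ 2) by ring]
    rw [mul_div_mul_left _ _ hMd']
  -- put it together
  have hTd : T.det ≠ 0 := hT.ne_zero
  have hTinvdet : T⁻¹.det = (T.det)⁻¹ := by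
    rw [Matrix.det_nonsing_inv, Ring.inverse_eq_inv']
  have hTinvUnit : IsUnit T⁻¹.det := by
    rw [hTinvdet]
    exact (isUnit_iff_ne_zero.mpr (inv_ne_zero hTd))
  rw [main T hT, main T⁻¹ hTinvUnit]
  -- entries of the inverse matrix
  have hinv : T⁻¹ = (T.det)⁻¹ • !![T 1 1, -(T 0 1); -(T 1 0), T 0 0] := by
    rw [Matrix.inv_def, Matrix.adjugate_fin_two, Ring.inverse_eq_inv']
  have e00 : T⁻¹ 0 0 = (T.det)⁻¹ * T 1 1 := by rw [hinv]; simp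
  have e01 : T⁻¹ 0 1 = (T.det)⁻¹ * (-(T 0 1)) := by rw [hinv]; simp
  have e10 : T⁻¹ 1 0 = (T.det)⁻¹ * (-(T 1 0)) := by rw [hinv]; simp
  have e11 : T⁻¹ 1 1 = (T.det)⁻¹ * T 0 0 := by rw [hinv]; simp
  rw [e00, e01, e10, e11, hTinvdet, abs_inv]
  have habs : |T.det| ≠ 0 := abs_ne_zero.mpr hTd
  have hsq : T.det ^ 2 = |T.det| ^ 2 := (sq_abs _).symm
  field_simp
  linear_combination (a * (T 0 0 ^ 2 + T 0 1 ^ 2 + T 1 0 ^ 2 + T 1 1 ^ 2)) * hsq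

end
end
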